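/- arXiv:1404.0648 — 6 statements merged into one kernel-verified Lean document; each statement's English description precedes it below -/
import Mathlib

section
/- The function ω: ℝ → ℝ defined by ω(0) = 1/2 and ω(y) = (exp(−y) − 1 + y)/y² for y ≠ 0 is continuously differentiable on ℝ, with ω'(0) = −1/6 and ω'(y) = (2(1 − exp(−y)) − y(1 + exp(−y)))/y³ for y ≠ 0. Moreover ω is positive and nonincreasing on ℝ, ω(y) → +∞ as y → −∞, and ω(y) → 0 as y → +∞. -/
set_option maxHeartbeats 1000000

open MeasureTheory intervalIntegral Filter Metric

/-- ω(0) = 1/2 and ω(y) = (exp(−y) − 1 + y)/y² for y ≠ 0. -/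
noncomputable def omegaFn (y : ℝ) : ℝ := if y = 0 then 1 / 2 else (Real.exp (-y) - 1 + y) / y ^ 2

private lemma omega_eq_integral (y : ℝ) :
    omegaFn y = ∫ t in (0:ℝ)..1, (1 - t) * Real.exp (-(t * y)) := by
  by_cases hy : y = 0
  · subst hy
    simp only [omegaFn, if_pos rfl, mul_zero, neg_zero, Real.exp_zero, mul_one]
    rw [intervalIntegral.integral_sub intervalIntegrable_const intervalIntegrable_id]
    simp
    norm_num
  · have key : ∀ t ∈ Set.uIcc (0:ℝ) 1,
        HasDerivAt (fun t : ℝ => Real.exp (-(t * y)) * (t / y + (1 - y) / y ^ 2))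
          ((1 - t) * Real.exp (-(t * y))) t := by
      intro t _
      have h1 : HasDerivAt (fun t : ℝ => -(t * y)) (-y) t := by
        exact ((hasDerivAt_id t).mul_const y).neg.congr_deriv (by ring)
      have h2 := h1.exp
      have h3 : HasDerivAt (fun t : ℝ => t / y + (1 - y) / y ^ 2) (1 / y) t := by
        simpa using ((hasDerivAt_id t).div_const y).add_const ((1 - y) / y ^ 2)
      have := h2.mul h3
      refine this.congr_deriv ?_
      field_simp
      ring
    have hint : IntervalIntegrable (fun t : ℝ => (1 - t) * Real.exp (-(t * y))) volume 0 1 :=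
      (Continuous.intervalIntegrable (by continuity) 0 1)
    rw [intervalIntegral.integral_eq_sub_of_hasDerivAt key hint]
    simp only [omegaFn, if_neg hy]
    field_simp
    simp only [mul_zero, neg_zero, Real.exp_zero, add_zero]
    ring

private lemma omega_hasDerivAt (y : ℝ) :
    HasDerivAt omegaFn (∫ t in (0:ℝ)..1, -(t * (1 - t)) * Real.exp (-(t * y))) y := by
  have hrep : omegaFn = fun x => ∫ t in (0:ℝ)..1, (1 - t) * Real.exp (-(t * x)) :=
    funext omega_eq_integral
  rw [hrep]
  have := intervalIntegral.hasDerivAt_integral_of_dominated_loc_of_deriv_le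
    (F := fun (x : ℝ) (t : ℝ) => (1 - t) * Real.exp (-(t * x)))
    (F' := fun (x : ℝ) (t : ℝ) => -(t * (1 - t)) * Real.exp (-(t * x)))
    (x₀ := y) (bound := fun _ => Real.exp (|y| + 1)) (a := 0) (b := 1) (μ := volume)
    (ball_mem_nhds y one_pos)
    (Eventually.of_forall fun x =>
      (Continuous.aestronglyMeasurable (by continuity)))
    (Continuous.intervalIntegrable (by continuity) 0 1)
    (Continuous.aestronglyMeasurable (by continuity))
    ?_ (intervalIntegrable_const) ?_
  · exact this.2
  · refine Eventually.of_forall fun t ht x hx => ?_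
    rw [Set.uIoc_of_le (by norm_num : (0:ℝ) ≤ 1)] at ht
    obtain ⟨ht0, ht1⟩ := ht
    have h1t : 0 ≤ 1 - t := by linarith
    have hxy : |x| ≤ |y| + 1 := by
      have h1 := abs_sub_abs_le_abs_sub x y
      have hd : |x - y| < 1 := by simpa [Real.dist_eq] using hx
      linarith
    have hexp : Real.exp (-(t * x)) ≤ Real.exp (|y| + 1) := by
      apply Real.exp_le_exp.2
      have h1 : -(t * x) ≤ |t * x| := neg_le_abs _
      have h2 : |t * x| = t * |x| := by rw [abs_mul, abs_of_pos ht0]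
      nlinarith [abs_nonneg x]
    have hcoef : |(-(t * (1 - t)))| ≤ 1 := by
      rw [abs_neg, abs_mul, abs_of_pos ht0, abs_of_nonneg h1t]; nlinarith
    calc ‖-(t * (1 - t)) * Real.exp (-(t * x))‖
        = |(-(t * (1 - t)))| * Real.exp (-(t * x)) := by
          rw [norm_mul, Real.norm_eq_abs, Real.norm_eq_abs,
            abs_of_pos (Real.exp_pos _)]
      _ ≤ 1 * Real.exp (|y| + 1) :=
          mul_le_mul hcoef hexp (Real.exp_pos _).le one_pos.le
      _ = Real.exp (|y| + 1) := one_mul _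
  · refine Eventually.of_forall fun t _ x _ => ?_
    have h : HasDerivAt (fun x : ℝ => -(t * x)) (-t) x := by
      exact ((hasDerivAt_id x).const_mul t).neg.congr_deriv (by ring)
    have := h.exp.const_mul (1 - t)
    refine this.congr_deriv ?_
    ring

private lemma omega_deriv_eq (y : ℝ) :
    deriv omegaFn y = ∫ t in (0:ℝ)..1, -(t * (1 - t)) * Real.exp (-(t * y)) :=
  (omega_hasDerivAt y).deriv

private lemma omega_differentiable : Differentiable ℝ omegaFn :=
  fun y => (omega_hasDerivAt y).differentiableAt

theorem omegaFn_properties :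
    ContDiff ℝ 1 omegaFn ∧
    deriv omegaFn 0 = -(1 / 6) ∧
    (∀ y : ℝ, y ≠ 0 →
      deriv omegaFn y = (2 * (1 - Real.exp (-y)) - y * (1 + Real.exp (-y))) / y ^ 3) ∧
    (∀ y : ℝ, 0 < omegaFn y) ∧
    Antitone omegaFn ∧
    Filter.Tendsto omegaFn Filter.atBot Filter.atTop ∧
    Filter.Tendsto omegaFn Filter.atTop (nhds 0) := by
  refine ⟨?_, ?_, ?_, ?_, ?_, ?_, ?_⟩
  · -- ContDiff
    rw [contDiff_one_iff_deriv]
    refine ⟨omega_differentiable, ?_⟩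
    have : deriv omegaFn = fun y => ∫ t in (0:ℝ)..1, -(t * (1 - t)) * Real.exp (-(t * y)) :=
      funext omega_deriv_eq
    rw [this]
    exact continuous_parametric_intervalIntegral_of_continuous'
      (f := fun (x : ℝ) (t : ℝ) => -(t * (1 - t)) * Real.exp (-(t * x)))
      (by apply Continuous.mul <;> continuity) 0 1
  · -- deriv at 0
    rw [omega_deriv_eq 0]
    have key : ∀ t ∈ Set.uIcc (0:ℝ) 1,
        HasDerivAt (fun t : ℝ => t ^ 3 / 3 - t ^ 2 / 2)
          (-(t * (1 - t)) * Real.exp (-(t * 0))) t := by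
      intro t _
      have h := ((hasDerivAt_pow 3 t).div_const 3).sub ((hasDerivAt_pow 2 t).div_const 2)
      refine h.congr_deriv ?_
      simp
      ring
    rw [intervalIntegral.integral_eq_sub_of_hasDerivAt key
      (Continuous.intervalIntegrable (by continuity) 0 1)]
    norm_num
  · -- deriv for y ≠ 0
    intro y hy
    have hev : omegaFn =ᶠ[nhds y] fun x => (Real.exp (-x) - 1 + x) / x ^ 2 := by
      filter_upwards [IsOpen.mem_nhds isOpen_ne hy] with x hx
      simp only [omegaFn, if_neg hx]
    rw [hev.deriv_eq]
    have h1 : HasDerivAt (fun x : ℝ => Real.exp (-x) - 1 + x) (-Real.exp (-y) + 1) y := by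
      have he : HasDerivAt (fun x : ℝ => Real.exp (-x)) (-Real.exp (-y)) y := by
        exact ((Real.hasDerivAt_exp (-y)).comp y (hasDerivAt_neg y)).congr_deriv (by ring)
      exact ((he.sub_const 1).add (hasDerivAt_id y)).congr_deriv (by ring)
    have h2 : HasDerivAt (fun x : ℝ => x ^ 2) (2 * y) y := by
      simpa using hasDerivAt_pow 2 y
    have h3 := h1.div h2 (pow_ne_zero 2 hy)
    rw [(show HasDerivAt (fun x : ℝ => (Real.exp (-x) - 1 + x) / x ^ 2) _ y from h3).deriv]
    field_simp
    ring
  · -- positivity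
    intro y
    rw [omega_eq_integral y]
    refine intervalIntegral.intervalIntegral_pos_of_pos_on
      (Continuous.intervalIntegrable (by continuity) 0 1) (fun t ht => ?_) one_pos
    have := ht.2
    have := Real.exp_pos (-(t * y))
    nlinarith
  · -- antitone
    refine antitone_of_deriv_nonpos omega_differentiable fun y => ?_
    rw [omega_deriv_eq y]
    have : (∫ t in (0:ℝ)..1, -(t * (1 - t)) * Real.exp (-(t * y)))
        = -∫ t in (0:ℝ)..1, (t * (1 - t)) * Real.exp (-(t * y)) := by
      rw [← intervalIntegral.integral_neg]
      congr 1; funext t; ring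
    rw [this, neg_nonpos]
    refine intervalIntegral.integral_nonneg (by norm_num) fun t ht => ?_
    have h1 := ht.1
    have h2 := ht.2
    have h3 : (0:ℝ) ≤ t * (1 - t) := by nlinarith
    exact mul_nonneg h3 (Real.exp_pos _).le
  · -- atBot → atTop
    have hev : (fun y => Real.exp (-y) / y ^ 2 + (y - 1) / y ^ 2) =ᶠ[atBot] omegaFn := by
      filter_upwards [eventually_lt_atBot (0:ℝ)] with y hy
      have hy' : y ≠ 0 := ne_of_lt hy
      simp only [omegaFn, if_neg hy']
      field_simp
      ring
    refine Tendsto.congr' hev ?_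
    have h1 : Tendsto (fun y : ℝ => Real.exp (-y) / y ^ 2) atBot atTop := by
      have h := (Real.tendsto_exp_div_pow_atTop 2).comp tendsto_neg_atBot_atTop
      refine h.congr fun y => ?_
      simp [Function.comp, neg_sq]
    have h2 : Tendsto (fun y : ℝ => (y - 1) / y ^ 2) atBot (nhds 0) := by
      have h3 : Tendsto (fun y : ℝ => y⁻¹ - y⁻¹ * y⁻¹) atBot (nhds 0) := by
        have hi : Tendsto (fun y : ℝ => y⁻¹) atBot (nhds (0:ℝ)) := by
          have ha : Tendsto (fun y : ℝ => -y) atBot atTop := tendsto_neg_atBot_atTop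
          have hb : Tendsto (fun r : ℝ => r⁻¹) atTop (nhds (0:ℝ)) := tendsto_inv_atTop_zero
          have h := (hb.comp ha).neg
          simpa [Function.comp, inv_neg] using h
        simpa using hi.sub (hi.mul hi)
      refine h3.congr' ?_
      filter_upwards [eventually_lt_atBot (0:ℝ)] with y hy
      have hy' : y ≠ 0 := ne_of_lt hy
      rw [eq_div_iff (pow_ne_zero 2 hy')]
      have h4 : y⁻¹ * y = 1 := inv_mul_cancel₀ hy'
      linear_combination (y - y⁻¹ * y - 1) * h4
    exact h1.atTop_add h2
  · -- atTop → 0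
    have hev : (fun y => Real.exp (-y) * (y⁻¹ * y⁻¹) + (y⁻¹ - y⁻¹ * y⁻¹)) =ᶠ[atTop] omegaFn := by
      filter_upwards [eventually_gt_atTop (0:ℝ)] with y hy
      have hy' : y ≠ 0 := ne_of_gt hy
      simp only [omegaFn, if_neg hy']
      field_simp
      ring
    refine Tendsto.congr' hev ?_
    have hi : Tendsto (fun y : ℝ => y⁻¹) atTop (nhds 0) := tendsto_inv_atTop_zero
    have he : Tendsto (fun y : ℝ => Real.exp (-y)) atTop (nhds 0) :=
      Real.tendsto_exp_neg_atTop_nhds_zero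
    have := (he.mul (hi.mul hi)).add (hi.sub (hi.mul hi))
    simpa using this
end

section
/- Let ρ > 0, ε ∈ [0,1), ν ∈ [0,1], m₁ ∈ ℝ and η ∈ ℝ. The function b(u) = (1/(1−ε))·(ρu/(2+ρu))·(m₁/ρ)·𝒢_η(u) satisfies b(0) = 0 and, for all u ≥ 0, b'(u) = [−η − ρ/(2+ρu)]·b(u) + (m₁/(1−ε))·(1 + νρu)/(2+ρu). -/
/-- ζ(0) = 1 and ζ(y) = (1 − exp(−y))/y for y ≠ 0. -/
noncomputable def zeta (y : ℝ) : ℝ := if y = 0 then 1 else (1 - Real.exp (-y)) / y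

/-- 𝒢_η(u) = ζ(ηu) + νρu·ω(ηu). -/
noncomputable def Gfun (η ν ρ : ℝ) (u : ℝ) : ℝ := zeta (η * u) + ν * ρ * u * omegaFn (η * u)

/-- b(u) = (1/(1−ε))·(ρu/(2+ρu))·(m₁/ρ)·𝒢_η(u). -/
noncomputable def bFn (ρ ε ν m₁ η : ℝ) (u : ℝ) : ℝ :=
  (1 / (1 - ε)) * (ρ * u / (2 + ρ * u)) * (m₁ / ρ) * Gfun η ν ρ u

lemma bFn_eq_ne (ρ ε ν m₁ η : ℝ) (hρ : ρ ≠ 0) (hη : η ≠ 0) (hε1 : (1:ℝ) - ε ≠ 0) :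
    bFn ρ ε ν m₁ η = fun u =>
      m₁ / (1 - ε) * ((1 - Real.exp (-(η * u))) / η
        + ν * ρ * (Real.exp (-(η * u)) - 1 + η * u) / η ^ 2) / (2 + ρ * u) := by
  funext u
  rcases eq_or_ne (2 + ρ * u) 0 with hd | hd
  · simp [bFn, hd]
  · rcases eq_or_ne u 0 with hu | hu
    · subst hu; simp [bFn, zeta, omegaFn]
    · have hηu : η * u ≠ 0 := mul_ne_zero hη hu
      simp only [bFn, Gfun, zeta, omegaFn, if_neg hηu]
      field_simp [hε1]

lemma bFn_eq_zero (ρ ε ν m₁ : ℝ) (hρ : ρ ≠ 0) (hε1 : (1:ℝ) - ε ≠ 0) :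
    bFn ρ ε ν m₁ 0 = fun u =>
      m₁ / (1 - ε) * (u + ν * ρ * u ^ 2 / 2) / (2 + ρ * u) := by
  funext u
  rcases eq_or_ne (2 + ρ * u) 0 with hd | hd
  · simp [bFn, hd]
  · simp only [bFn, Gfun, zeta, omegaFn, zero_mul, if_pos rfl, ↓reduceIte]
    field_simp [hε1]

theorem bFn_ODE (ρ ε ν m₁ η : ℝ) (hρ : 0 < ρ) (hε : ε ∈ Set.Ico (0:ℝ) 1)
    (hν : ν ∈ Set.Icc (0:ℝ) 1) :
    bFn ρ ε ν m₁ η 0 = 0 ∧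
    ∀ u : ℝ, 0 ≤ u →
      HasDerivAt (bFn ρ ε ν m₁ η)
        ((-η - ρ / (2 + ρ * u)) * bFn ρ ε ν m₁ η u
          + (m₁ / (1 - ε)) * (1 + ν * ρ * u) / (2 + ρ * u)) u := by
  have hε1 : (1 : ℝ) - ε ≠ 0 := sub_ne_zero.mpr (ne_of_lt hε.2).symm
  constructor
  · simp [bFn]
  · intro u hu
    have hD : (0:ℝ) < 2 + ρ * u := by positivity
    have hd : (2 + ρ * u : ℝ) ≠ 0 := ne_of_gt hD
    have hDeriv : HasDerivAt (fun u : ℝ => 2 + ρ * u) ρ u := by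
      simpa using ((hasDerivAt_id u).const_mul ρ).const_add 2
    rcases eq_or_ne η 0 with hη | hη
    · subst hη
      rw [bFn_eq_zero ρ ε ν m₁ (ne_of_gt hρ) hε1]
      have hN : HasDerivAt (fun u : ℝ => u + ν * ρ * u ^ 2 / 2)
          (1 + ν * ρ * (2 * u) / 2) u := by
        have h2 : HasDerivAt (fun u : ℝ => u ^ 2) (2 * u) u := by
          simpa using hasDerivAt_pow 2 u
        exact (hasDerivAt_id u).add (((h2.const_mul (ν * ρ)).div_const 2))
      have h : HasDerivAt (fun u : ℝ => m₁ / (1 - ε) * (u + ν * ρ * u ^ 2 / 2) / (2 + ρ * u)) _ u :=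
        ((hN.const_mul (m₁ / (1 - ε))).div hDeriv hd)
      convert h using 1
      field_simp
      ring
    · rw [bFn_eq_ne ρ ε ν m₁ η (ne_of_gt hρ) hη hε1]
      have hE : HasDerivAt (fun u : ℝ => Real.exp (-(η * u)))
          (Real.exp (-(η * u)) * (-η)) u := by
        have h1 : HasDerivAt (fun u : ℝ => -(η * u)) (-η) u := by
          simpa [Pi.neg_def] using ((hasDerivAt_id u).const_mul η).neg
        exact h1.exp
      have hN : HasDerivAt (fun u : ℝ => (1 - Real.exp (-(η * u))) / η
            + ν * ρ * (Real.exp (-(η * u)) - 1 + η * u) / η ^ 2)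
          ((0 - Real.exp (-(η * u)) * (-η)) / η
            + ν * ρ * (Real.exp (-(η * u)) * (-η) - 0 + η) / η ^ 2) u := by
        have hA : HasDerivAt (fun u : ℝ => 1 - Real.exp (-(η * u)))
            (0 - Real.exp (-(η * u)) * (-η)) u := (hasDerivAt_const u 1).sub hE
        have hB : HasDerivAt (fun u : ℝ => Real.exp (-(η * u)) - 1 + η * u)
            (Real.exp (-(η * u)) * (-η) - 0 + η) u := by
          exact ((hE.sub (hasDerivAt_const u 1)).add (by simpa using (hasDerivAt_id u).const_mul η))
        exact (hA.div_const η).add ((hB.const_mul (ν * ρ)).div_const (η ^ 2))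
      have h : HasDerivAt (fun u : ℝ => m₁ / (1 - ε) * ((1 - Real.exp (-(η * u))) / η
          + ν * ρ * (Real.exp (-(η * u)) - 1 + η * u) / η ^ 2) / (2 + ρ * u)) _ u :=
        ((hN.const_mul (m₁ / (1 - ε))).div hDeriv hd)
      convert h using 1
      field_simp
      ring
end

section
/- Let ρ > 0, ε ∈ [0,1), ν ∈ [0,1], m₁ ∈ ℝ and η ∈ ℝ with η ≠ 0. Define b(u) = (1/(1−ε))·(ρu/(2+ρu))·(m₁/ρ)·𝒢_η(u), k(u) = ((1−ε)/2)·b(u) + m₁/(2ρ), and c(u) = −(1/(1−ε))·((ρu/2)/(2+ρu))·(m₁²/ρ²)·𝒢_η(u)² − (m₁²/(8(1−ε)ρ))·(1 − νρ/η)²·u·ζ(ηu)·[1 + exp(−ηu) − 2·ζ(ηu)]. Then c(0) = 0 and, for all u ≥ 0, c'(u) = −2η·c(u) + (1−ν)·m₁·b(u) − (ρ/(1−ε))·k(u)². -/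
/-- k(u) = ((1−ε)/2)·b(u) + m₁/(2ρ). -/
noncomputable def kFn (ρ ε ν m₁ η : ℝ) (u : ℝ) : ℝ :=
  ((1 - ε) / 2) * bFn ρ ε ν m₁ η u + m₁ / (2 * ρ)

/-- c(u) in the non-critical case η ≠ 0. -/
noncomputable def cFn (ρ ε ν m₁ η : ℝ) (u : ℝ) : ℝ :=
  -(1 / (1 - ε)) * ((ρ * u / 2) / (2 + ρ * u)) * (m₁ ^ 2 / ρ ^ 2) * (Gfun η ν ρ u) ^ 2
    - (m₁ ^ 2 / (8 * (1 - ε) * ρ)) * (1 - ν * ρ / η) ^ 2 * u * zeta (η * u)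
        * (1 + Real.exp (-(η * u)) - 2 * zeta (η * u))

/-- Elementary (removable-singularity-free) form of `cFn`. -/
noncomputable def Faux (ρ ε ν m₁ η : ℝ) (u : ℝ) : ℝ :=
  ((m₁ ^ 2 * (η - ν * ρ) ^ 2 / (4 * (1 - ε) * η ^ 4)) * (1 - Real.exp (-(η * u))) ^ 2
      + (-(m₁ ^ 2 * ν * (η - ν * ρ) / ((1 - ε) * η ^ 3))) * (1 - Real.exp (-(η * u)))
      + (-(m₁ ^ 2 * ν ^ 2 * ρ / (2 * (1 - ε) * η ^ 2))) * u) / (2 + ρ * u)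
    + (-(m₁ ^ 2 * (η - ν * ρ) ^ 2 / (8 * (1 - ε) * ρ * η ^ 3))) * (1 - Real.exp (-(η * u)) ^ 2)

/-- Derivative of `Faux`. -/
noncomputable def Daux (ρ ε ν m₁ η : ℝ) (u : ℝ) : ℝ :=
  (((m₁ ^ 2 * (η - ν * ρ) ^ 2 / (4 * (1 - ε) * η ^ 4)) * (2 * (1 - Real.exp (-(η * u))) * (η * Real.exp (-(η * u))))
      + (-(m₁ ^ 2 * ν * (η - ν * ρ) / ((1 - ε) * η ^ 3))) * (η * Real.exp (-(η * u)))
      + (-(m₁ ^ 2 * ν ^ 2 * ρ / (2 * (1 - ε) * η ^ 2)))) * (2 + ρ * u)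
    - ((m₁ ^ 2 * (η - ν * ρ) ^ 2 / (4 * (1 - ε) * η ^ 4)) * (1 - Real.exp (-(η * u))) ^ 2
      + (-(m₁ ^ 2 * ν * (η - ν * ρ) / ((1 - ε) * η ^ 3))) * (1 - Real.exp (-(η * u)))
      + (-(m₁ ^ 2 * ν ^ 2 * ρ / (2 * (1 - ε) * η ^ 2))) * u) * ρ) / (2 + ρ * u) ^ 2
    + (-(m₁ ^ 2 * (η - ν * ρ) ^ 2 / (8 * (1 - ε) * ρ * η ^ 3))) * (2 * η * Real.exp (-(η * u)) ^ 2)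

lemma Faux_eq (ρ ε ν m₁ η : ℝ) (hρ : ρ ≠ 0) (hε : (1:ℝ) - ε ≠ 0) (hη : η ≠ 0)
    (x : ℝ) (h2 : 2 + ρ * x ≠ 0) : cFn ρ ε ν m₁ η x = Faux ρ ε ν m₁ η x := by
  by_cases hx : x = 0
  · subst hx
    simp [cFn, Faux, zeta, Gfun, omegaFn]
  · simp only [cFn, Faux, zeta, Gfun, omegaFn, if_neg (mul_ne_zero hη hx)]
    field_simp
    ring

lemma Faux_hasDerivAt (ρ ε ν m₁ η : ℝ) (u : ℝ) (h2 : 2 + ρ * u ≠ 0) :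
    HasDerivAt (Faux ρ ε ν m₁ η) (Daux ρ ε ν m₁ η u) u := by
  have hlin : HasDerivAt (fun x : ℝ => -(η * x)) (-η) u := by
    exact (((hasDerivAt_id u).const_mul η).neg).congr_deriv (by ring)
  have hE : HasDerivAt (fun x : ℝ => Real.exp (-(η * x))) (Real.exp (-(η * u)) * -η) u :=
    hlin.exp
  have h1mE : HasDerivAt (fun x : ℝ => 1 - Real.exp (-(η * x)))
      (η * Real.exp (-(η * u))) u := by
    have h := (hasDerivAt_const u (1:ℝ)).sub hE
    exact h.congr_deriv (by ring)
  have hsq : HasDerivAt (fun x : ℝ => (1 - Real.exp (-(η * x))) ^ 2)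
      (2 * (1 - Real.exp (-(η * u))) * (η * Real.exp (-(η * u)))) u := by
    have h := h1mE.pow 2
    exact h.congr_deriv (by ring)
  have hnum : HasDerivAt (fun x : ℝ =>
      (m₁ ^ 2 * (η - ν * ρ) ^ 2 / (4 * (1 - ε) * η ^ 4)) * (1 - Real.exp (-(η * x))) ^ 2
      + (-(m₁ ^ 2 * ν * (η - ν * ρ) / ((1 - ε) * η ^ 3))) * (1 - Real.exp (-(η * x)))
      + (-(m₁ ^ 2 * ν ^ 2 * ρ / (2 * (1 - ε) * η ^ 2))) * x)
      ((m₁ ^ 2 * (η - ν * ρ) ^ 2 / (4 * (1 - ε) * η ^ 4)) * (2 * (1 - Real.exp (-(η * u))) * (η * Real.exp (-(η * u))))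
      + (-(m₁ ^ 2 * ν * (η - ν * ρ) / ((1 - ε) * η ^ 3))) * (η * Real.exp (-(η * u)))
      + (-(m₁ ^ 2 * ν ^ 2 * ρ / (2 * (1 - ε) * η ^ 2)))) u := by
    have := ((hsq.const_mul (m₁ ^ 2 * (η - ν * ρ) ^ 2 / (4 * (1 - ε) * η ^ 4))).add
      (h1mE.const_mul (-(m₁ ^ 2 * ν * (η - ν * ρ) / ((1 - ε) * η ^ 3))))).add
      ((hasDerivAt_id u).const_mul (-(m₁ ^ 2 * ν ^ 2 * ρ / (2 * (1 - ε) * η ^ 2))))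
    exact this.congr_deriv (by ring)
  have hden : HasDerivAt (fun x : ℝ => 2 + ρ * x) ρ u := by
    simpa using ((hasDerivAt_id u).const_mul ρ).const_add 2
  have hdiv := hnum.div hden h2
  have hEsq : HasDerivAt (fun x : ℝ => 1 - Real.exp (-(η * x)) ^ 2)
      (2 * η * Real.exp (-(η * u)) ^ 2) u := by
    have h := (hasDerivAt_const u (1:ℝ)).sub (hE.pow 2)
    exact h.congr_deriv (by ring)
  have hlast := hEsq.const_mul (-(m₁ ^ 2 * (η - ν * ρ) ^ 2 / (8 * (1 - ε) * ρ * η ^ 3)))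
  have := hdiv.add hlast
  exact this

set_option maxHeartbeats 2000000 in
theorem cFn_ODE (ρ ε ν m₁ η : ℝ) (hρ : 0 < ρ) (hε : ε ∈ Set.Ico (0:ℝ) 1)
    (hν : ν ∈ Set.Icc (0:ℝ) 1) (hη : η ≠ 0) :
    cFn ρ ε ν m₁ η 0 = 0 ∧
    ∀ u : ℝ, 0 ≤ u →
      HasDerivAt (cFn ρ ε ν m₁ η)
        (-(2 * η) * cFn ρ ε ν m₁ η u + (1 - ν) * m₁ * bFn ρ ε ν m₁ η u
          - (ρ / (1 - ε)) * (kFn ρ ε ν m₁ η u) ^ 2) u := by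
  obtain ⟨hε0, hε1⟩ := hε
  have hεne : (1:ℝ) - ε ≠ 0 := by linarith
  have hρne : ρ ≠ 0 := ne_of_gt hρ
  constructor
  · simp [cFn, zeta]
  · intro u hu
    have h2pos : (0:ℝ) < 2 + ρ * u := by nlinarith
    have h2ne : (2:ℝ) + ρ * u ≠ 0 := ne_of_gt h2pos
    have hneg : -2 / ρ < u := by
      have : -2 / ρ < 0 := div_neg_of_neg_of_pos (by norm_num) hρ
      linarith
    have hev : cFn ρ ε ν m₁ η =ᶠ[nhds u] Faux ρ ε ν m₁ η := by
      filter_upwards [Ioi_mem_nhds hneg] with x hx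
      have hx2 : (0:ℝ) < 2 + ρ * x := by
        have := (div_lt_iff₀ hρ).mp hx
        nlinarith
      exact Faux_eq ρ ε ν m₁ η hρne hεne hη x (ne_of_gt hx2)
    have hF := Faux_hasDerivAt ρ ε ν m₁ η u h2ne
    have hkey : -(2 * η) * cFn ρ ε ν m₁ η u + (1 - ν) * m₁ * bFn ρ ε ν m₁ η u
        - (ρ / (1 - ε)) * (kFn ρ ε ν m₁ η u) ^ 2 = Daux ρ ε ν m₁ η u := by
      by_cases hx : u = 0
      · subst hx
        have hc0 : cFn ρ ε ν m₁ η 0 = 0 := by simp [cFn, zeta]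
        have hb0 : bFn ρ ε ν m₁ η 0 = 0 := by simp [bFn]
        have hk0 : kFn ρ ε ν m₁ η 0 = m₁ / (2 * ρ) := by simp [kFn, hb0]
        rw [hc0, hb0, hk0]
        simp only [Daux, mul_zero, neg_zero, Real.exp_zero]
        field_simp
        ring
      · simp only [cFn, bFn, kFn, Gfun, zeta, omegaFn, Daux, if_neg (mul_ne_zero hη hx)]
        field_simp
        ring
    rw [hkey]
    exact hF.congr_of_eventuallyEq hev
end

section
/- Let ρ > 0, ν ∈ [0,1], β, α ∈ ℝ with η = β − α ≠ 0, and T > 0. Define φ_η(t) = [1 + exp(−η(T−t)) + νρ(T−t)·ζ(η(T−t)) + (β/ρ)·(2 + ρ(T−t)·{1 + ζ(η(T−t)) + νρ(T−t)·ω(η(T−t))})] / (2·(2 + ρ(T−t))) for t ∈ [0,T]. Then for all t ∈ [0,T]: φ_η(t)·exp(β(T−t)) = (β/2)·(1/ρ + ν/η)·exp(β(T−t)) + [1/2 + ν(ρ−2β)/(2η) + (β/(2η))·(1 − νρ/η)]·exp(β(T−t))/(2+ρ(T−t)) + [1/2 − νρ/(2η) − (β/(2η))·(1 − νρ/η)]·exp(α(T−t))/(2+ρ(T−t)).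 -/
/-- φ_η(t) of the optimal strategy. -/
noncomputable def phiFn (ρ ν β η T : ℝ) (t : ℝ) : ℝ :=
  (1 + Real.exp (-(η * (T - t))) + ν * ρ * (T - t) * zeta (η * (T - t))
      + (β / ρ) * (2 + ρ * (T - t)
          * (1 + zeta (η * (T - t)) + ν * ρ * (T - t) * omegaFn (η * (T - t)))))
    / (2 * (2 + ρ * (T - t)))

theorem phiFn_decomposition (ρ ν β α T : ℝ) (hρ : 0 < ρ) (hν : ν ∈ Set.Icc (0:ℝ) 1)
    (hη : β - α ≠ 0) (hT : 0 < T) :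
    ∀ t ∈ Set.Icc (0:ℝ) T,
      phiFn ρ ν β (β - α) T t * Real.exp (β * (T - t))
        = (β / 2) * (1 / ρ + ν / (β - α)) * Real.exp (β * (T - t))
          + (1 / 2 + ν * (ρ - 2 * β) / (2 * (β - α))
              + (β / (2 * (β - α))) * (1 - ν * ρ / (β - α)))
            * Real.exp (β * (T - t)) / (2 + ρ * (T - t))
          + (1 / 2 - ν * ρ / (2 * (β - α))
              - (β / (2 * (β - α))) * (1 - ν * ρ / (β - α)))
            * Real.exp (α * (T - t)) / (2 + ρ * (T - t)) := by
  intro t ht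
  obtain ⟨ht0, htT⟩ := ht
  set s := T - t with hs
  have hsnn : 0 ≤ s := by simp [hs]; linarith
  have hden : (0:ℝ) < 2 + ρ * s := by nlinarith
  have hden' : (2:ℝ) + ρ * s ≠ 0 := ne_of_gt hden
  have hE : Real.exp (α * s) = Real.exp (β * s) * Real.exp (-((β - α) * s)) := by
    rw [← Real.exp_add]; ring_nf
  rcases eq_or_ne s 0 with h0 | h0
  · simp [phiFn, zeta, omegaFn, h0, ← hs]
    field_simp
    ring
  · have hηs : (β - α) * s ≠ 0 := mul_ne_zero hη h0
    rw [phiFn, zeta, omegaFn, ← hs, if_neg hηs, if_neg hηs, hE]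
    generalize Real.exp (β * s) = A
    generalize Real.exp (-((β - α) * s)) = B
    field_simp
    ring
end

section
/- Let ρ > 0, ν ∈ [0,1], β, α ∈ ℝ with η = β − α ≠ 0, and T > 0. Define φ_η(t) = [1 + exp(−η(T−t)) + νρ(T−t)·ζ(η(T−t)) + (β/ρ)·(2 + ρ(T−t)·{1 + ζ(η(T−t)) + νρ(T−t)·ω(η(T−t))})] / (2·(2 + ρ(T−t))). Then for all 0 ≤ s ≤ t ≤ T: ∫ₛᵗ φ_η(u)·exp(−βu) du = (1/2)·(1/ρ + ν/η)·[exp(−βs) − exp(−βt)] + (exp(−βT)/(2ρ))·[1 + ν(ρ−2β)/η + (β/η)·(1 − νρ/η)]·[L(ρ, β, T−s) − L(ρ, β, T−t)] + (exp(−βT)/(2ρ))·[1 − νρ/η − (β/η)·(1 − νρ/η)]·[L(ρ, α, T−s) − L(ρ, α, T−t)]. -/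
/-- L(r, λ, t) = r·∫₀ᵗ exp(λs)/(2 + rs) ds. -/
noncomputable def Lfun (r lam t : ℝ) : ℝ := r * ∫ s in (0:ℝ)..t, Real.exp (lam * s) / (2 + r * s)

lemma key_pointwise (ρ ν β α T : ℝ) (hρ : 0 < ρ) (hη : β - α ≠ 0) (u : ℝ) (hu : u ≤ T) :
    phiFn ρ ν β (β - α) T u * Real.exp (-(β * u))
      = (1 / 2) * (1 / ρ + ν / (β - α)) * (β * Real.exp (-(β * u)))
        + (Real.exp (-(β * T)) / (2 * ρ))
            * (1 + ν * (ρ - 2 * β) / (β - α) + (β / (β - α)) * (1 - ν * ρ / (β - α)))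
            * (ρ * (Real.exp (β * (T - u)) / (2 + ρ * (T - u))))
        + (Real.exp (-(β * T)) / (2 * ρ))
            * (1 - ν * ρ / (β - α) - (β / (β - α)) * (1 - ν * ρ / (β - α)))
            * (ρ * (Real.exp (α * (T - u)) / (2 + ρ * (T - u)))) := by
  have hρ' : ρ ≠ 0 := ne_of_gt hρ
  rcases eq_or_ne u T with huT | huT
  · subst huT
    simp only [phiFn, sub_self, mul_zero, zeta, omegaFn, if_pos rfl, zero_mul, Real.exp_zero]
    field_simp
    simp only [neg_zero, Real.exp_zero]; ring
  · set η := β - α with hηdef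
    set τ := T - u with hτdef
    have hτ0 : 0 < τ := by have : u < T := lt_of_le_of_ne hu huT; simp [hτdef]; linarith
    have hden : (0:ℝ) < 2 + ρ * τ := by nlinarith
    have hden' : (2 + ρ * τ) ≠ 0 := ne_of_gt hden
    have hy : η * τ ≠ 0 := mul_ne_zero hη (ne_of_gt hτ0)
    have e1 : Real.exp (β * τ) = Real.exp (-(β * u)) / Real.exp (-(β * T)) := by
      rw [eq_div_iff (Real.exp_ne_zero _), ← Real.exp_add]; congr 1; rw [hτdef]; ring
    have e2 : Real.exp (α * τ)
        = Real.exp (-(β * u)) * Real.exp (-(η * τ)) / Real.exp (-(β * T)) := by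
      rw [eq_div_iff (Real.exp_ne_zero _), ← Real.exp_add, ← Real.exp_add]; congr 1; rw [hτdef, hηdef]; ring
    simp only [phiFn, ← hτdef, ← hηdef, zeta, omegaFn, if_neg hy, e1, e2]
    have hET := Real.exp_ne_zero (-(β * T))
    field_simp
    ring

theorem integral_phiFn (ρ ν β α T : ℝ) (hρ : 0 < ρ) (hν : ν ∈ Set.Icc (0:ℝ) 1)
    (hη : β - α ≠ 0) (hT : 0 < T) :
    ∀ s t : ℝ, 0 ≤ s → s ≤ t → t ≤ T →
      (∫ u in s..t, phiFn ρ ν β (β - α) T u * Real.exp (-(β * u)))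
        = (1 / 2) * (1 / ρ + ν / (β - α)) * (Real.exp (-(β * s)) - Real.exp (-(β * t)))
          + (Real.exp (-(β * T)) / (2 * ρ))
              * (1 + ν * (ρ - 2 * β) / (β - α) + (β / (β - α)) * (1 - ν * ρ / (β - α)))
              * (Lfun ρ β (T - s) - Lfun ρ β (T - t))
          + (Real.exp (-(β * T)) / (2 * ρ))
              * (1 - ν * ρ / (β - α) - (β / (β - α)) * (1 - ν * ρ / (β - α)))
              * (Lfun ρ α (T - s) - Lfun ρ α (T - t)) := by
  intro s t hs hst htT
  have hρ' : ρ ≠ 0 := ne_of_gt hρ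
  -- integrability of the L-integrand on nonneg intervals
  have hg : ∀ (lam a b : ℝ), 0 ≤ a → 0 ≤ b →
      IntervalIntegrable (fun x => Real.exp (lam * x) / (2 + ρ * x)) MeasureTheory.volume a b := by
    intro lam a b ha hb
    apply ContinuousOn.intervalIntegrable
    apply ContinuousOn.div (Continuous.continuousOn (by fun_prop))
      (Continuous.continuousOn (by fun_prop))
    intro x hx
    have hx0 : 0 ≤ x := by
      rcases Set.mem_uIcc.mp hx with ⟨h1, _⟩ | ⟨h1, _⟩ <;> linarith
    nlinarith
  have hLdiff : ∀ lam : ℝ, Lfun ρ lam (T - s) - Lfun ρ lam (T - t)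
      = ρ * ∫ u in s..t, Real.exp (lam * (T - u)) / (2 + ρ * (T - u)) := by
    intro lam
    have h1 := intervalIntegral.integral_add_adjacent_intervals
      (hg lam 0 (T - t) le_rfl (by linarith)) (hg lam (T - t) (T - s) (by linarith) (by linarith))
    have h2 : (∫ u in s..t, Real.exp (lam * (T - u)) / (2 + ρ * (T - u)))
        = ∫ x in (T - t)..(T - s), Real.exp (lam * x) / (2 + ρ * x) :=
      intervalIntegral.integral_comp_sub_left (fun x => Real.exp (lam * x) / (2 + ρ * x)) T
    simp only [Lfun]
    rw [h2, ← h1]; ring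
  -- rewrite the integrand pointwise
  have hcong : (∫ u in s..t, phiFn ρ ν β (β - α) T u * Real.exp (-(β * u)))
      = ∫ u in s..t,
          ((1 / 2) * (1 / ρ + ν / (β - α)) * (β * Real.exp (-(β * u)))
          + (Real.exp (-(β * T)) / (2 * ρ))
              * (1 + ν * (ρ - 2 * β) / (β - α) + (β / (β - α)) * (1 - ν * ρ / (β - α)))
              * (ρ * (Real.exp (β * (T - u)) / (2 + ρ * (T - u))))
          + (Real.exp (-(β * T)) / (2 * ρ))
              * (1 - ν * ρ / (β - α) - (β / (β - α)) * (1 - ν * ρ / (β - α)))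
              * (ρ * (Real.exp (α * (T - u)) / (2 + ρ * (T - u))))) := by
    apply intervalIntegral.integral_congr
    intro u hu
    have huT : u ≤ T := by
      rw [Set.uIcc_of_le hst] at hu; exact le_trans hu.2 htT
    exact key_pointwise ρ ν β α T hρ hη u huT
  -- integrability of the comp pieces
  have hcomp : ∀ lam : ℝ, IntervalIntegrable
      (fun u => Real.exp (lam * (T - u)) / (2 + ρ * (T - u))) MeasureTheory.volume s t := by
    intro lam
    have := (hg lam (T - t) (T - s) (by linarith) (by linarith)).comp_sub_left T
    simpa using this.symm
  have i1 : IntervalIntegrable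
      (fun u => (1 / 2) * (1 / ρ + ν / (β - α)) * (β * Real.exp (-(β * u))))
      MeasureTheory.volume s t := Continuous.intervalIntegrable (by fun_prop) s t
  have i2 : ∀ c lam : ℝ, IntervalIntegrable
      (fun u => c * (ρ * (Real.exp (lam * (T - u)) / (2 + ρ * (T - u)))))
      MeasureTheory.volume s t := fun c lam => ((hcomp lam).const_mul ρ).const_mul c
  rw [hcong, intervalIntegral.integral_add (i1.add (i2 _ β)) (i2 _ α),
    intervalIntegral.integral_add i1 (i2 _ β)]
  -- first piece via FTC
  have hFTC : (∫ u in s..t, β * Real.exp (-(β * u)))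
      = Real.exp (-(β * s)) - Real.exp (-(β * t)) := by
    have hderiv : ∀ x ∈ Set.uIcc s t,
        HasDerivAt (fun u => -Real.exp (-(β * u))) (β * Real.exp (-(β * x))) x := by
      intro x _
      have h := (Real.hasDerivAt_exp (-(β * x))).comp x
        (((hasDerivAt_id x).const_mul β).neg)
      have h2 := h.neg
      rw [show β * Real.exp (-(β * x)) = -(Real.exp (-(β * x)) * -(β * 1)) by ring]
      exact h2
    rw [intervalIntegral.integral_eq_sub_of_hasDerivAt hderiv
      (Continuous.intervalIntegrable (by fun_prop) s t)]
    ring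
  rw [intervalIntegral.integral_const_mul, hFTC]
  simp only [intervalIntegral.integral_const_mul, hLdiff]
end

section
/- Let ρ > 0, q > 0, m₁ > 0, ν ∈ [0,1] and T > 0. Let N: [0,T] → ℝ be a bounded measurable function with N(0) = N₀, and suppose D, δ: [0,T] → ℝ are bounded measurable functions satisfying, for all t ∈ [0,T], the integral equations D(t) = D(0) − ρ·∫₀ᵗ D(s) ds + ((1−ν)/q)·(N(t) − N₀) and δ(t) = δ(0) − ρ·∫₀ᵗ δ(s) ds + ((1−ν)ρ/m₁)·(N(t) − N₀). Then for all t ∈ [0,T], (m₁/q)·δ(t) − ρ·D(t) = exp(−ρt)·((m₁/q)·δ(0) − ρ·D(0)). In particular, if q·D(0) = m₁·δ(0)/ρ, then q·D(t) = m₁·δ(t)/ρ for all t ∈ [0,T]. -/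
open MeasureTheory intervalIntegral Set

theorem MIHM_steady_state (ρ q m₁ ν T : ℝ) (hρ : 0 < ρ) (hq : 0 < q) (hm : 0 < m₁)
    (hν : ν ∈ Set.Icc (0:ℝ) 1) (hT : 0 < T)
    (N D δ : ℝ → ℝ)
    (hNmeas : Measurable N) (hNbd : ∃ C : ℝ, ∀ t ∈ Set.Icc (0:ℝ) T, |N t| ≤ C)
    (hDmeas : Measurable D) (hDbd : ∃ C : ℝ, ∀ t ∈ Set.Icc (0:ℝ) T, |D t| ≤ C)
    (hδmeas : Measurable δ) (hδbd : ∃ C : ℝ, ∀ t ∈ Set.Icc (0:ℝ) T, |δ t| ≤ C)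
    (hD : ∀ t ∈ Set.Icc (0:ℝ) T,
      D t = D 0 - ρ * (∫ s in (0:ℝ)..t, D s) + ((1 - ν) / q) * (N t - N 0))
    (hδeq : ∀ t ∈ Set.Icc (0:ℝ) T,
      δ t = δ 0 - ρ * (∫ s in (0:ℝ)..t, δ s) + ((1 - ν) * ρ / m₁) * (N t - N 0)) :
    (∀ t ∈ Set.Icc (0:ℝ) T,
      (m₁ / q) * δ t - ρ * D t = Real.exp (-(ρ * t)) * ((m₁ / q) * δ 0 - ρ * D 0)) ∧
    (q * D 0 = m₁ * δ 0 / ρ → ∀ t ∈ Set.Icc (0:ℝ) T, q * D t = m₁ * δ t / ρ) := by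
  obtain ⟨Cd, hCd⟩ := hDbd
  obtain ⟨Cδ, hCδ⟩ := hδbd
  set E : ℝ → ℝ := fun t => (m₁/q) * δ t - ρ * D t with hEdef
  set Et : ℝ → ℝ := fun t => if t ∈ Set.Icc (0:ℝ) T then E t else 0 with hEtdef
  have hEmeas : Measurable E := (hδmeas.const_mul _).sub (hDmeas.const_mul _)
  have hEtmeas : Measurable Et := hEmeas.ite measurableSet_Icc measurable_const
  set C : ℝ := |m₁/q| * |Cδ| + ρ * |Cd| with hCdef
  have hCnn : 0 ≤ C := by positivity
  have hEtbd : ∀ t, |Et t| ≤ C := by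
    intro t
    by_cases ht : t ∈ Set.Icc (0:ℝ) T
    · simp only [hEtdef, if_pos ht]
      calc |E t| ≤ |m₁/q| * |δ t| + ρ * |D t| := by
            simp only [hEdef]
            refine (abs_sub _ _).trans ?_
            rw [abs_mul, abs_mul, abs_of_pos hρ]
        _ ≤ |m₁/q| * |Cδ| + ρ * |Cd| := by
            have h1 : |δ t| ≤ |Cδ| := (hCδ t ht).trans (le_abs_self _)
            have h2 : |D t| ≤ |Cd| := (hCd t ht).trans (le_abs_self _)
            have h3 := mul_le_mul_of_nonneg_left h1 (abs_nonneg (m₁/q))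
            have h4 := mul_le_mul_of_nonneg_left h2 hρ.le
            linarith
    · simp only [hEtdef, if_neg ht, abs_zero]; exact hCnn
  -- interval integrability of Et everywhere
  have hEtint : ∀ a b : ℝ, IntervalIntegrable Et volume a b := by
    intro a b
    refine (_root_.intervalIntegrable_const (c := C)).mono_fun'
      hEtmeas.aestronglyMeasurable (ae_of_all _ ?_)
    intro t; simpa using hEtbd t
  -- interval integrability of D, δ on [0,t] ⊆ [0,T]
  have hsub : ∀ t ∈ Set.Icc (0:ℝ) T, Set.uIoc (0:ℝ) t ⊆ Set.Icc (0:ℝ) T := by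
    intro t ht s hs
    rw [Set.uIoc_of_le ht.1] at hs
    exact ⟨le_of_lt hs.1, hs.2.trans ht.2⟩
  have hDint : ∀ t ∈ Set.Icc (0:ℝ) T, IntervalIntegrable D volume 0 t := by
    intro t ht
    refine (_root_.intervalIntegrable_const (c := |Cd|)).mono_fun'
      hDmeas.aestronglyMeasurable (ae_restrict_of_forall_mem measurableSet_uIoc ?_)
    intro s hs
    exact (hCd s (hsub t ht hs)).trans (le_abs_self _)
  have hδint : ∀ t ∈ Set.Icc (0:ℝ) T, IntervalIntegrable δ volume 0 t := by
    intro t ht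
    refine (_root_.intervalIntegrable_const (c := |Cδ|)).mono_fun'
      hδmeas.aestronglyMeasurable (ae_restrict_of_forall_mem measurableSet_uIoc ?_)
    intro s hs
    exact (hCδ s (hsub t ht hs)).trans (le_abs_self _)
  set F : ℝ → ℝ := fun t => ∫ s in (0:ℝ)..t, Et s with hFdef
  have hFcont : Continuous F := intervalIntegral.continuous_primitive hEtint 0
  -- F t equals ∫ E on [0,T]
  have hFE : ∀ t ∈ Set.Icc (0:ℝ) T, F t = ∫ s in (0:ℝ)..t, E s := by
    intro t ht
    refine intervalIntegral.integral_congr ?_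
    intro s hs
    rw [Set.uIcc_of_le ht.1] at hs
    exact if_pos ⟨hs.1, hs.2.trans ht.2⟩
  set g : ℝ → ℝ := fun t => E 0 - ρ * F t with hgdef
  have hgcont : Continuous g := continuous_const.sub (continuous_const.mul hFcont)
  have h0T : (0:ℝ) ∈ Set.Icc (0:ℝ) T := ⟨le_refl _, le_of_lt hT⟩
  -- key: on [0,T], E t = g t
  have hkey : ∀ t ∈ Set.Icc (0:ℝ) T, E t = g t := by
    intro t ht
    have h1 := hD t ht
    have h2 := hδeq t ht
    have hIE : ∫ s in (0:ℝ)..t, E s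
        = (m₁/q) * (∫ s in (0:ℝ)..t, δ s) - ρ * (∫ s in (0:ℝ)..t, D s) := by
      rw [hEdef]
      rw [intervalIntegral.integral_sub ((hδint t ht).const_mul _) ((hDint t ht).const_mul _),
        intervalIntegral.integral_const_mul, intervalIntegral.integral_const_mul]
    simp only [hgdef, hFE t ht, hIE]
    simp only [hEdef]
    rw [h1, h2]
    have hq' : q ≠ 0 := ne_of_gt hq
    have hm' : m₁ ≠ 0 := ne_of_gt hm
    field_simp
    ring
  set H : ℝ → ℝ := fun t => ∫ s in (0:ℝ)..t, g s with hHdef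
  have hHderiv : ∀ t : ℝ, HasDerivAt H (g t) t := by
    intro t
    exact intervalIntegral.integral_hasDerivAt_right
      (hgcont.intervalIntegrable 0 t)
      (hgcont.stronglyMeasurableAtFilter _ _)
      hgcont.continuousAt
  have hHF : ∀ t ∈ Set.Icc (0:ℝ) T, H t = F t := by
    intro t ht
    refine intervalIntegral.integral_congr ?_
    intro s hs
    rw [Set.uIcc_of_le ht.1] at hs
    have hsT : s ∈ Set.Icc (0:ℝ) T := ⟨hs.1, hs.2.trans ht.2⟩
    simp only [hEtdef, if_pos hsT]
    exact ((hkey s hsT).symm)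
  have hgH : ∀ t ∈ Set.Icc (0:ℝ) T, g t = E 0 - ρ * H t := by
    intro t ht; rw [hgdef]; simp only [hHF t ht]
  set u : ℝ → ℝ := fun t => Real.exp (ρ*t) * (ρ * H t - E 0) with hudef
  have huderiv : ∀ t ∈ Set.Icc (0:ℝ) T, HasDerivAt u 0 t := by
    intro t ht
    have h1 : HasDerivAt (fun s => Real.exp (ρ*s)) (Real.exp (ρ*t) * ρ) t := by
      have := (Real.hasDerivAt_exp (ρ*t)).comp t ((hasDerivAt_id t).const_mul ρ)
      simpa [mul_comm, Function.comp_def] using this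
    have h2 : HasDerivAt (fun s => ρ * H s - E 0) (ρ * g t) t :=
      ((hHderiv t).const_mul ρ).sub_const _
    have := h1.mul h2
    have heq : Real.exp (ρ*t) * ρ * (ρ * H t - E 0) + Real.exp (ρ*t) * (ρ * g t) = 0 := by
      rw [hgH t ht]; ring
    simpa [heq, hudef, Pi.mul_def] using this
  have hucont : ContinuousOn u (Set.Icc 0 T) := by
    intro t ht
    exact ((huderiv t ht).continuousAt).continuousWithinAt
  have huconst : ∀ t ∈ Set.Icc (0:ℝ) T, u t = u 0 := by
    intro t ht
    exact constant_of_has_deriv_right_zero hucont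
      (fun x hx => ((huderiv x ⟨hx.1, le_of_lt hx.2⟩).hasDerivWithinAt)) t ht
  have hH0 : H 0 = 0 := by simp [hHdef]
  have hu0 : u 0 = -(E 0) := by simp [hudef, hH0]
  have hmain : ∀ t ∈ Set.Icc (0:ℝ) T, E t = Real.exp (-(ρ*t)) * E 0 := by
    intro t ht
    have h1 := huconst t ht
    rw [hu0, hudef] at h1
    simp only at h1
    have hexp : Real.exp (ρ*t) ≠ 0 := Real.exp_ne_zero _
    have h2 : ρ * H t - E 0 = -(E 0) * Real.exp (-(ρ*t)) := by
      rw [Real.exp_neg]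
      field_simp at h1 ⊢
      linarith [h1]
    have h3 : g t = E 0 - ρ * H t := hgH t ht
    rw [hkey t ht, h3]
    rw [show ρ * H t = E 0 + (-(E 0) * Real.exp (-(ρ*t))) by linarith [h2]]
    ring
  constructor
  · intro t ht
    exact hmain t ht
  · intro hinit t ht
    have h := hmain t ht
    have hE0 : E 0 = 0 := by
      simp only [hEdef]
      have hq' : q ≠ 0 := ne_of_gt hq
      have hρ' : ρ ≠ 0 := ne_of_gt hρ
      field_simp at hinit ⊢
      linarith [hinit]
    rw [hE0, mul_zero] at h
    have : (m₁/q) * δ t - ρ * D t = 0 := h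
    have hq' : q ≠ 0 := ne_of_gt hq
    have hρ' : ρ ≠ 0 := ne_of_gt hρ
    field_simp at this ⊢
    linarith [this]
end
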